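/- Fix n and a decoration δ : {1,…,n} → {none, down, up, updown}. The δ-permutree congruence ≡_δ is a lattice congruence of the right weak order on permutations of {1,…,n}: if σ ≡_δ σ' and τ ≡_δ τ', then whenever μ is a least upper bound of {σ, τ} and μ' is a least upper bound of {σ', τ'} in the right weak order, one has μ ≡_δ μ'; and likewise for greatest lower bounds. -/

import Mathlib

/-- The four possible decorations of a value. -/
inductive Decoration : Type
  | none | down | up | updown
  deriving DecidableEq

/-- The set of (value) inversions of a permutation `σ` of `{1,…,n}`;
the right weak order is `σ ≤ τ` iff `invSet σ ⊆ invSet τ`. -/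
def invSet (n : ℕ) (σ : Equiv.Perm (Fin n)) : Set (Fin n × Fin n) :=
  {p | p.1 < p.2 ∧ σ⁻¹ p.2 < σ⁻¹ p.1}

/-- An elementary permutree exchange for the decoration `δ`: the permutations
`σ` and `τ = σ ∘ (swap of two adjacent positions i, i+1)` differ by exchanging
two adjacent letters `a = σ i < c = σ (i+1)` in one-line notation, and there
is a `b` with `a < b < c` such that either `δ b ∈ {down, updown}` and `b`
occurs after position `i+1` (in the suffix), or `δ b ∈ {up, updown}` and `b`
occurs before position `i` (in the prefix). -/
def PermutreeMove (n : ℕ) (δ : Fin n → Decoration)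
    (σ τ : Equiv.Perm (Fin n)) : Prop :=
  ∃ i j : Fin n, (i : ℕ) + 1 = (j : ℕ) ∧ σ i < σ j ∧ τ = σ * Equiv.swap i j ∧
    ∃ b : Fin n, σ i < b ∧ b < σ j ∧
      (((δ b = Decoration.down ∨ δ b = Decoration.updown) ∧ j < σ⁻¹ b) ∨
        ((δ b = Decoration.up ∨ δ b = Decoration.updown) ∧ σ⁻¹ b < i))

/-- The `δ`-permutree congruence: the equivalence relation on permutations
generated by the elementary permutree exchanges. -/
inductive PermutreeCong (n : ℕ) (δ : Fin n → Decoration) :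
    Equiv.Perm (Fin n) → Equiv.Perm (Fin n) → Prop
  | rel : ∀ {σ τ}, PermutreeMove n δ σ τ → PermutreeCong n δ σ τ
  | refl : ∀ σ, PermutreeCong n δ σ σ
  | symm : ∀ {σ τ}, PermutreeCong n δ σ τ → PermutreeCong n δ τ σ
  | trans : ∀ {σ τ ρ}, PermutreeCong n δ σ τ → PermutreeCong n δ τ ρ →
      PermutreeCong n δ σ ρ

/-- `μ` is a least upper bound of `{σ, τ}` in the right weak order. -/
def IsWeakLUB (n : ℕ) (μ σ τ : Equiv.Perm (Fin n)) : Prop :=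
  invSet n σ ⊆ invSet n μ ∧ invSet n τ ⊆ invSet n μ ∧
    ∀ ρ : Equiv.Perm (Fin n),
      invSet n σ ⊆ invSet n ρ → invSet n τ ⊆ invSet n ρ → invSet n μ ⊆ invSet n ρ

/-- `μ` is a greatest lower bound of `{σ, τ}` in the right weak order. -/
def IsWeakGLB (n : ℕ) (μ σ τ : Equiv.Perm (Fin n)) : Prop :=
  invSet n μ ⊆ invSet n σ ∧ invSet n μ ⊆ invSet n τ ∧
    ∀ ρ : Equiv.Perm (Fin n),
      invSet n ρ ⊆ invSet n σ → invSet n ρ ⊆ invSet n τ → invSet n ρ ⊆ invSet n μ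

theorem Equiv.inv_apply_self {α : Type*} (σ : α ≃ α) (x : α) :
    (σ⁻¹ : Equiv.Perm α) (σ x) = x := σ.symm_apply_apply x

theorem Equiv.apply_inv_self {α : Type*} (σ : α ≃ α) (x : α) :
    σ ((σ⁻¹ : Equiv.Perm α) x) = x := σ.apply_symm_apply x

namespace PTAux
open Equiv

variable {n : ℕ}
open Equiv

variable {n : ℕ}

structure IsInvSet (n : ℕ) (I : Set (Fin n × Fin n)) : Prop where
  inc : ∀ p ∈ I, p.1 < p.2
  tr : ∀ a b c : Fin n, (a, b) ∈ I → (b, c) ∈ I → (a, c) ∈ I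
  cotr : ∀ a b c : Fin n, a < b → b < c → (a, c) ∈ I → (a, b) ∈ I ∨ (b, c) ∈ I


lemma invSet_isInvSet (σ : Perm (Fin n)) : IsInvSet n (invSet n σ) where
  inc p hp := hp.1
  tr a b c h1 h2 := ⟨h1.1.trans h2.1, h2.2.trans h1.2⟩
  cotr a b c hab hbc h := by
    rcases lt_or_ge (σ⁻¹ b) (σ⁻¹ a) with h' | h'
    · exact Or.inl ⟨hab, h'⟩
    · exact Or.inr ⟨hbc, lt_of_lt_of_le h.2 h'⟩

lemma realize (I : Set (Fin n × Fin n)) (h : IsInvSet n I) :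
    ∃ σ : Perm (Fin n), invSet n σ = I := by
  classical
  set s : Fin n → Fin n → Prop := fun p q => (p < q ∧ (p, q) ∉ I) ∨ (q < p ∧ (q, p) ∈ I)
    with hs
  have sirr : ∀ p, ¬ s p p := by
    rintro p (⟨h1, _⟩ | ⟨h1, _⟩) <;> exact lt_irrefl _ h1
  have strans : ∀ p q r, s p q → s q r → s p r := by
    rintro p q r (⟨hpq, hn⟩ | ⟨hqp, hi⟩) (⟨hqr, hn'⟩ | ⟨hrq, hi'⟩)
    · refine Or.inl ⟨hpq.trans hqr, fun hI => ?_⟩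
      rcases h.cotr p q r hpq hqr hI with h1 | h1
      exacts [hn h1, hn' h1]
    · rcases lt_trichotomy p r with hpr | rfl | hrp
      · exact Or.inl ⟨hpr, fun hI => hn (h.tr _ _ _ hI hi')⟩
      · exact absurd hi' hn
      · refine Or.inr ⟨hrp, ?_⟩
        rcases h.cotr r p q hrp hpq hi' with h1 | h1
        exacts [h1, absurd h1 hn]
    · rcases lt_trichotomy p r with hpr | rfl | hrp
      · refine Or.inl ⟨hpr, fun hI => hn' (h.tr _ _ _ hi hI)⟩
      · exact absurd hi hn'
      · refine Or.inr ⟨hrp, ?_⟩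
        rcases h.cotr q r p hqr hrp hi with h1 | h1
        exacts [absurd h1 hn', h1]
    · exact Or.inr ⟨hrq.trans hqp, h.tr _ _ _ hi' hi⟩
  have stot : ∀ p q : Fin n, p ≠ q → s p q ∨ s q p := by
    intro p q hne
    rcases lt_or_gt_of_ne hne with hlt | hgt
    · by_cases hI : (p, q) ∈ I
      · exact Or.inr (Or.inr ⟨hlt, hI⟩)
      · exact Or.inl (Or.inl ⟨hlt, hI⟩)
    · by_cases hI : (q, p) ∈ I
      · exact Or.inl (Or.inr ⟨hgt, hI⟩)
      · exact Or.inr (Or.inl ⟨hgt, hI⟩)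
  have hcard : ∀ p : Fin n, (Finset.univ.filter (fun q => s q p)).card < n := by
    intro p
    have hsub : (Finset.univ.filter (fun q => s q p)) ⊆ Finset.univ.erase p := by
      intro q hq
      simp only [Finset.mem_filter] at hq
      refine Finset.mem_erase.2 ⟨fun hqp => sirr p (hqp ▸ hq.2), Finset.mem_univ _⟩
    have := Finset.card_le_card hsub
    have h2 : (Finset.univ.erase p).card = n - 1 := by
      rw [Finset.card_erase_of_mem (Finset.mem_univ _)]
      simp
    have hn : 0 < n := p.pos
    omega
  let f : Fin n → Fin n := fun p => ⟨_, hcard p⟩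
  have fmono : ∀ p q : Fin n, s p q → f p < f q := by
    intro p q hpq
    have hsub : insert p (Finset.univ.filter (fun r => s r p)) ⊆
        Finset.univ.filter (fun r => s r q) := by
      intro r hr
      rcases Finset.mem_insert.1 hr with rfl | hr
      · exact Finset.mem_filter.2 ⟨Finset.mem_univ _, hpq⟩
      · exact Finset.mem_filter.2 ⟨Finset.mem_univ _,
          strans _ _ _ (Finset.mem_filter.1 hr).2 hpq⟩
    have hnm : p ∉ Finset.univ.filter (fun r => s r p) := by
      simp only [Finset.mem_filter]
      exact fun hh => sirr p hh.2
    have := Finset.card_le_card hsub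
    rw [Finset.card_insert_of_notMem hnm] at this
    exact Fin.mk_lt_mk.2 this
  have finj : Function.Injective f := by
    intro p q hpq
    by_contra hne
    rcases stot p q hne with hh | hh
    · exact absurd (hpq ▸ fmono p q hh) (lt_irrefl _)
    · exact absurd (hpq ▸ fmono q p hh) (lt_irrefl _)
  have fbij : Function.Bijective f := Finite.injective_iff_bijective.1 finj
  refine ⟨(Equiv.ofBijective f fbij).symm, ?_⟩
  have hinv : ∀ p, ((Equiv.ofBijective f fbij).symm : Perm (Fin n))⁻¹ p = f p := by
    intro p; simp [Equiv.Perm.inv_def, Equiv.ofBijective]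
  ext ⟨p, q⟩
  simp only [invSet, Set.mem_setOf_eq, hinv]
  constructor
  · rintro ⟨hpq, hlt⟩
    by_contra hI
    exact absurd (fmono p q (Or.inl ⟨hpq, hI⟩)) (fun hc => lt_irrefl _ (hc.trans hlt))
  · intro hI
    have hpq : p < q := h.inc _ hI
    exact ⟨hpq, fmono q p (Or.inr ⟨hpq, hI⟩)⟩



lemma invSet_mul_swap (σ : Perm (Fin n)) (i j : Fin n) (hij : (i : ℕ) + 1 = (j : ℕ))
    (hlt : σ i < σ j) :
    invSet n (σ * Equiv.swap i j) = invSet n σ ∪ {(σ i, σ j)} := by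
  have hijlt : i < j := by rw [Fin.lt_def]; omega
  have hne : i ≠ j := ne_of_lt hijlt
  ext ⟨p, q⟩
  have hswinv : (σ * Equiv.swap i j)⁻¹ = Equiv.swap i j * σ⁻¹ := by
    rw [mul_inv_rev, Equiv.swap_inv]
  simp only [invSet, Set.mem_setOf_eq, Set.mem_union, Set.mem_singleton_iff,
    Prod.mk.injEq, hswinv, Equiv.Perm.mul_apply]
  have hpe : ∀ r : Fin n, r = σ i ↔ σ⁻¹ r = i := by
    intro r; constructor
    · rintro rfl; exact σ.inv_apply_self i
    · intro hh; rw [← hh, σ.apply_inv_self]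
  have hpe' : ∀ r : Fin n, r = σ j ↔ σ⁻¹ r = j := by
    intro r; constructor
    · rintro rfl; exact σ.inv_apply_self j
    · intro hh; rw [← hh, σ.apply_inv_self]
  constructor
  · rintro ⟨hpq, hlt'⟩
    by_cases hui : σ⁻¹ p = i
    · by_cases hvj : σ⁻¹ q = j
      · exact Or.inr ⟨(hpe p).2 hui, (hpe' q).2 hvj⟩
      · -- swap u = j, v ∉ {i, j} (v = i would give p = q)
        have hvi : σ⁻¹ q ≠ i := fun hh => (ne_of_lt hpq) (by
          have := hh.trans hui.symm
          exact (σ⁻¹.injective this).symm)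
        rw [hui, Equiv.swap_apply_left, Equiv.swap_apply_of_ne_of_ne hvi hvj] at hlt'
        refine Or.inl ⟨hpq, ?_⟩
        rw [hui]
        rw [Fin.lt_def] at hlt' ⊢
        have := Fin.val_ne_of_ne hvi
        omega
    · by_cases huj : σ⁻¹ p = j
      · -- swap u = i
        by_cases hvi : σ⁻¹ q = i
        · -- swap v = j : j < i contradiction
          rw [huj, hvi, Equiv.swap_apply_left, Equiv.swap_apply_right] at hlt'
          exact absurd hlt' (not_lt_of_gt hijlt)
        · have hvj : σ⁻¹ q ≠ j := fun hh => (ne_of_lt hpq) (σ⁻¹.injective (hh.trans huj.symm)).symm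
          rw [huj, Equiv.swap_apply_right, Equiv.swap_apply_of_ne_of_ne hvi hvj] at hlt'
          refine Or.inl ⟨hpq, ?_⟩
          rw [huj]
          rw [Fin.lt_def] at hlt' ⊢
          omega
      · -- u ∉ {i,j}
        rw [Equiv.swap_apply_of_ne_of_ne hui huj] at hlt'
        by_cases hvi : σ⁻¹ q = i
        · rw [hvi, Equiv.swap_apply_left] at hlt'
          refine Or.inl ⟨hpq, ?_⟩
          rw [hvi]
          rw [Fin.lt_def] at hlt' ⊢
          have := Fin.val_ne_of_ne huj
          omega
        · by_cases hvj : σ⁻¹ q = j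
          · rw [hvj, Equiv.swap_apply_right] at hlt'
            refine Or.inl ⟨hpq, ?_⟩
            rw [hvj]
            rw [Fin.lt_def] at hlt' ⊢
            have := Fin.val_ne_of_ne huj
            omega
          · rw [Equiv.swap_apply_of_ne_of_ne hvi hvj] at hlt'
            exact Or.inl ⟨hpq, hlt'⟩
  · rintro (⟨hpq, hlt'⟩ | ⟨rfl, rfl⟩)
    · refine ⟨hpq, ?_⟩
      by_cases hui : σ⁻¹ p = i
      · have hvi : σ⁻¹ q ≠ i := fun hh => (lt_irrefl _ (hui ▸ hh ▸ hlt'))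
        have hvj : σ⁻¹ q ≠ j := by
          intro hh
          rw [hui, hh] at hlt'
          exact absurd hlt' (not_lt_of_gt hijlt)
        rw [hui, Equiv.swap_apply_left, Equiv.swap_apply_of_ne_of_ne hvi hvj]
        rw [Fin.lt_def] at hlt' ⊢
        rw [hui] at hlt'
        omega
      · by_cases huj : σ⁻¹ p = j
        · have hvj : σ⁻¹ q ≠ j := fun hh => (lt_irrefl _ (huj ▸ hh ▸ hlt'))
          by_cases hvi : σ⁻¹ q = i
          · -- v = i, u = j: p = σ j, q = σ i, p < q contradicts hlt
            exfalso
            have hp : p = σ j := (hpe' p).2 huj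
            have hq : q = σ i := (hpe q).2 hvi
            rw [hp, hq] at hpq
            exact absurd hpq (not_lt_of_gt hlt)
          · rw [huj, Equiv.swap_apply_right, Equiv.swap_apply_of_ne_of_ne hvi hvj]
            rw [Fin.lt_def] at hlt' ⊢
            rw [huj] at hlt'
            have := Fin.val_ne_of_ne hvi
            omega
        · rw [Equiv.swap_apply_of_ne_of_ne hui huj]
          by_cases hvi : σ⁻¹ q = i
          · rw [hvi, Equiv.swap_apply_left]
            rw [Fin.lt_def] at hlt' ⊢
            rw [hvi] at hlt'
            have := Fin.val_ne_of_ne huj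
            omega
          · by_cases hvj : σ⁻¹ q = j
            · rw [hvj, Equiv.swap_apply_right]
              rw [Fin.lt_def] at hlt' ⊢
              rw [hvj] at hlt'
              omega
            · rw [Equiv.swap_apply_of_ne_of_ne hvi hvj]
              exact hlt'
    · refine ⟨hlt, ?_⟩
      rw [σ.inv_apply_self, σ.inv_apply_self, Equiv.swap_apply_left, Equiv.swap_apply_right]
      exact hijlt

lemma eq_or_adjacent (π π' : Perm (Fin n)) (hsub : invSet n π ⊆ invSet n π') :
    π = π' ∨ ∃ i j : Fin n, (i : ℕ) + 1 = (j : ℕ) ∧ π i < π j ∧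
      (π i, π j) ∈ invSet n π' := by
  by_cases H : ∃ i j : Fin n, (i : ℕ) + 1 = (j : ℕ) ∧ π i < π j ∧ (π i, π j) ∈ invSet n π'
  · exact Or.inr H
  left
  push_neg at H
  have hadj : ∀ i j : Fin n, (i : ℕ) + 1 = (j : ℕ) → π'⁻¹ (π i) < π'⁻¹ (π j) := by
    intro i j hij
    have hijlt : i < j := by rw [Fin.lt_def]; omega
    have hne : π i ≠ π j := fun hh => (ne_of_lt hijlt) (π.injective hh)
    rcases lt_or_gt_of_ne hne with hlt | hgt
    · have hnotin := H i j hij hlt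
      have hne' : π'⁻¹ (π i) ≠ π'⁻¹ (π j) := fun hh => hne (π'⁻¹.injective hh)
      rcases lt_or_gt_of_ne hne' with hh | hh
      · exact hh
      · exact absurd ⟨hlt, hh⟩ hnotin
    · have hmem : (π j, π i) ∈ invSet n π := by
        refine ⟨hgt, ?_⟩
        rw [π.inv_apply_self, π.inv_apply_self]
        exact hijlt
      exact (hsub hmem).2
  set f : Fin n → Fin n := fun i => π'⁻¹ (π i) with hf
  have hmono : ∀ d : ℕ, ∀ i j : Fin n, (i : ℕ) + d + 1 = (j : ℕ) → f i < f j := by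
    intro d
    induction d with
    | zero => intro i j hij; exact hadj i j (by omega)
    | succ m ih =>
      intro i j hij
      have hm : (i : ℕ) + m + 1 < n := by have := j.isLt; omega
      have h1 := ih i ⟨(i : ℕ) + m + 1, hm⟩ (by simp)
      have h2 := hadj ⟨(i : ℕ) + m + 1, hm⟩ j (by simp; omega)
      exact h1.trans h2
  have hmono' : StrictMono f := by
    intro i j hij
    have : (i : ℕ) + ((j : ℕ) - (i : ℕ) - 1) + 1 = (j : ℕ) := by
      rw [Fin.lt_def] at hij; omega
    exact hmono _ i j this
  have hle : ∀ g : Fin n → Fin n, StrictMono g → ∀ i : Fin n, (i : ℕ) ≤ (g i : ℕ) := by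
    intro g hg
    have key : ∀ k : ℕ, ∀ i : Fin n, (i : ℕ) = k → k ≤ (g i : ℕ) := by
      intro k
      induction k with
      | zero => intro i _; omega
      | succ m ihm =>
        intro i hi
        have hm : m < n := by have := i.isLt; omega
        have h1 := ihm ⟨m, hm⟩ rfl
        have h2 : g ⟨m, hm⟩ < g i := hg (by rw [Fin.lt_def]; simp; omega)
        rw [Fin.lt_def] at h2
        omega
    intro i; exact key _ i rfl
  have hid : ∀ i : Fin n, f i = i := by
    intro i
    have h1 := hle f hmono' i
    -- f bijective, inverse also strict mono
    have hfinj : Function.Injective f := hmono'.injective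
    have hfbij : Function.Bijective f := Finite.injective_iff_bijective.1 hfinj
    set e := Equiv.ofBijective f hfbij
    have hemono : StrictMono (e.symm : Fin n → Fin n) := by
      intro a b hab
      rcases lt_trichotomy (e.symm a) (e.symm b) with hh | hh | hh
      · exact hh
      · exfalso; rw [← e.apply_symm_apply a, ← e.apply_symm_apply b, hh] at hab
        exact lt_irrefl _ hab
      · exfalso
        have := hmono' hh
        have hea : (e (e.symm a) : Fin n) = a := e.apply_symm_apply a
        have heb : (e (e.symm b) : Fin n) = b := e.apply_symm_apply b
        have hfa : f (e.symm a) = a := hea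
        have hfb : f (e.symm b) = b := heb
        rw [hfa, hfb] at this
        exact lt_irrefl _ (this.trans hab)
    have h2 := hle (fun x => e.symm x) hemono (f i)
    have h3 : e.symm (f i) = i := e.symm_apply_apply i
    rw [h3] at h2
    apply Fin.ext
    omega
  apply Equiv.ext
  intro i
  have h := hid i
  have h2 : π' (π'⁻¹ (π i)) = π' i := congrArg π' h
  rwa [π'.apply_inv_self] at h2


lemma invSet_inj {π π' : Perm (Fin n)} (h : invSet n π = invSet n π') : π = π' := by
  rcases eq_or_adjacent π π' (h ▸ Set.Subset.rfl) with he | ⟨i, j, hij, hlt, hmem⟩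
  · exact he
  · exfalso
    rw [← h] at hmem
    have := hmem.2
    rw [π.inv_apply_self, π.inv_apply_self] at this
    rw [Fin.lt_def] at this
    omega

def clos (I : Set (Fin n × Fin n)) : Set (Fin n × Fin n) :=
  {p | Relation.TransGen (fun a b : Fin n => (a, b) ∈ I) p.1 p.2}

lemma subset_clos (I : Set (Fin n × Fin n)) : I ⊆ clos I := by
  rintro ⟨p, q⟩ hp
  exact Relation.TransGen.single hp

lemma clos_subset {I : Set (Fin n × Fin n)} {J : Set (Fin n × Fin n)}
    (hJ : ∀ a b c : Fin n, (a, b) ∈ J → (b, c) ∈ J → (a, c) ∈ J)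
    (hIJ : I ⊆ J) : clos I ⊆ J := by
  rintro ⟨p, q⟩ hp
  simp only [clos, Set.mem_setOf_eq] at hp
  induction hp with
  | single h => exact hIJ h
  | tail _ h ih => exact hJ _ _ _ ih (hIJ h)

lemma clos_isInvSet (I₁ I₂ : Set (Fin n × Fin n)) (h1 : IsInvSet n I₁) (h2 : IsInvSet n I₂) :
    IsInvSet n (clos (I₁ ∪ I₂)) := by
  have hinc : ∀ p ∈ clos (I₁ ∪ I₂), p.1 < p.2 := by
    rintro ⟨p, q⟩ hp
    simp only [clos, Set.mem_setOf_eq] at hp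
    induction hp with
    | single h => rcases h with h | h; exacts [h1.inc _ h, h2.inc _ h]
    | tail _ h ih =>
      rcases h with h | h
      exacts [ih.trans (h1.inc _ h), ih.trans (h2.inc _ h)]
  refine ⟨hinc, ?_, ?_⟩
  · intro a b c hab hbc
    exact Relation.TransGen.trans hab hbc
  · intro a c b hac hcb hmem
    simp only [clos, Set.mem_setOf_eq] at hmem ⊢
    induction hmem with
    | single h =>
      rcases h with h | h
      · rcases h1.cotr _ _ _ hac hcb h with hh | hh
        exacts [Or.inl (Relation.TransGen.single (Or.inl hh)),
          Or.inr (Relation.TransGen.single (Or.inl hh))]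
      · rcases h2.cotr _ _ _ hac hcb h with hh | hh
        exacts [Or.inl (Relation.TransGen.single (Or.inr hh)),
          Or.inr (Relation.TransGen.single (Or.inr hh))]
    | @tail w z hxw hwz ih =>
      rcases lt_trichotomy c w with hcw | rfl | hwc
      · rcases ih hcw with hh | hh
        · exact Or.inl hh
        · exact Or.inr (hh.tail hwz)
      · exact Or.inl hxw
      · rcases hwz with h | h
        · rcases h1.cotr w c z hwc hcb h with hh | hh
          · exact Or.inl (hxw.tail (Or.inl hh))
          · exact Or.inr (Relation.TransGen.single (Or.inl hh))
        · rcases h2.cotr w c z hwc hcb h with hh | hh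
          · exact Or.inl (hxw.tail (Or.inr hh))
          · exact Or.inr (Relation.TransGen.single (Or.inr hh))

lemma exists_lub (σ τ : Perm (Fin n)) : ∃ μ, IsWeakLUB n μ σ τ := by
  obtain ⟨μ, hμ⟩ := realize _ (clos_isInvSet _ _ (invSet_isInvSet σ) (invSet_isInvSet τ))
  refine ⟨μ, ?_, ?_, ?_⟩
  · rw [hμ]; exact Set.subset_union_left.trans (subset_clos _)
  · rw [hμ]; exact Set.subset_union_right.trans (subset_clos _)
  · intro ρ hσ hτ
    rw [hμ]
    exact clos_subset (invSet_isInvSet ρ).tr (Set.union_subset hσ hτ)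

lemma chain (δ : Fin n → Decoration) (μ μ' : Perm (Fin n)) (b : Fin n)
    (key : ∀ x y : Fin n, (x, y) ∈ invSet n μ' → (x, y) ∉ invSet n μ →
      x < b ∧ b < y ∧
        (((δ b = Decoration.down ∨ δ b = Decoration.updown) ∧ (b, y) ∈ invSet n μ) ∨
          ((δ b = Decoration.up ∨ δ b = Decoration.updown) ∧ (x, b) ∈ invSet n μ))) :
    ∀ k : ℕ, ∀ π : Perm (Fin n), (invSet n μ' \ invSet n π).ncard ≤ k →
      invSet n μ ⊆ invSet n π → invSet n π ⊆ invSet n μ' →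
      PermutreeCong n δ π μ' := by
  intro k
  induction k with
  | zero =>
    intro π hcard h1 h2
    have hfin : (invSet n μ' \ invSet n π).Finite := Set.toFinite _
    have hemp : invSet n μ' \ invSet n π = ∅ :=
      (Set.ncard_eq_zero hfin).1 (Nat.le_zero.mp hcard)
    have heq : invSet n π = invSet n μ' := by
      refine Set.Subset.antisymm h2 fun p hp => ?_
      by_contra hc
      exact absurd (hemp ▸ (⟨hp, hc⟩ : p ∈ invSet n μ' \ invSet n π)) (Set.notMem_empty p)
    rw [invSet_inj heq]
    exact PermutreeCong.refl _
  | succ m ih =>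
    intro π hcard h1 h2
    rcases eq_or_adjacent π μ' h2 with rfl | ⟨i, j, hij, hlt, hmem⟩
    · exact PermutreeCong.refl _
    · have hinv' : invSet n (π * Equiv.swap i j) = invSet n π ∪ {(π i, π j)} :=
        invSet_mul_swap π i j hij hlt
      have hnot : (π i, π j) ∉ invSet n π := by
        rintro ⟨-, hc⟩
        rw [π.inv_apply_self, π.inv_apply_self, Fin.lt_def] at hc
        omega
      obtain ⟨hxb, hby, hcase⟩ := key (π i) (π j) hmem (fun hc => hnot (h1 hc))
      have hmove : PermutreeMove n δ π (π * Equiv.swap i j) := by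
        refine ⟨i, j, hij, hlt, rfl, b, hxb, hby, ?_⟩
        rcases hcase with ⟨hδ, hb⟩ | ⟨hδ, hb⟩
        · left
          refine ⟨hδ, ?_⟩
          have := (h1 hb).2
          rwa [π.inv_apply_self] at this
        · right
          refine ⟨hδ, ?_⟩
          have := (h1 hb).2
          rwa [π.inv_apply_self] at this
      have h1' : invSet n μ ⊆ invSet n (π * Equiv.swap i j) := by
        rw [hinv']; exact h1.trans Set.subset_union_left
      have h2' : invSet n (π * Equiv.swap i j) ⊆ invSet n μ' := by
        rw [hinv']
        exact Set.union_subset h2 (by simpa using hmem)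
      have hdiff : invSet n μ' \ invSet n (π * Equiv.swap i j)
          = (invSet n μ' \ invSet n π) \ {(π i, π j)} := by
        rw [hinv']
        ext p
        simp only [Set.mem_diff, Set.mem_union, Set.mem_singleton_iff]
        tauto
      have hcard' : (invSet n μ' \ invSet n (π * Equiv.swap i j)).ncard ≤ m := by
        rw [hdiff]
        have hfin : (invSet n μ' \ invSet n π).Finite := Set.toFinite _
        have hmemd : (π i, π j) ∈ invSet n μ' \ invSet n π := ⟨hmem, hnot⟩
        have := Set.ncard_diff_singleton_lt_of_mem hmemd hfin
        omega
      exact PermutreeCong.trans (PermutreeCong.rel hmove) (ih _ hcard' h1' h2')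

lemma lub_comm {μ σ τ : Perm (Fin n)} (h : IsWeakLUB n μ σ τ) : IsWeakLUB n μ τ σ :=
  ⟨h.2.1, h.1, fun ρ ha hb => h.2.2 ρ hb ha⟩

lemma lub_move (δ : Fin n → Decoration) {σ σ' τ μ μ' : Perm (Fin n)}
    (hm : PermutreeMove n δ σ σ')
    (h : IsWeakLUB n μ σ τ) (h' : IsWeakLUB n μ' σ' τ) : PermutreeCong n δ μ μ' := by
  obtain ⟨i, j, hij, hlt, rfl, b, hb1, hb2, hcase⟩ := hm
  have hσ' : invSet n (σ * Equiv.swap i j) = invSet n σ ∪ {(σ i, σ j)} :=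
    invSet_mul_swap σ i j hij hlt
  have hσμ' : invSet n σ ⊆ invSet n μ' := by
    refine Set.Subset.trans ?_ h'.1
    rw [hσ']; exact Set.subset_union_left
  have hμμ' : invSet n μ ⊆ invSet n μ' := h.2.2 μ' hσμ' h'.2.1
  have hJ : IsInvSet n (invSet n μ) := invSet_isInvSet μ
  set J := invSet n μ with hJdef
  set K : Set (Fin n × Fin n) :=
    J ∪ {p | p.1 < p.2 ∧ (p.1 = σ i ∨ (p.1, σ i) ∈ J) ∧ (p.2 = σ j ∨ (σ j, p.2) ∈ J)}
    with hK
  have hKtr : ∀ x y z : Fin n, (x, y) ∈ K → (y, z) ∈ K → (x, z) ∈ K := by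
    rintro x y z (hxy | ⟨hxy, hx, hy⟩) (hyz | ⟨hyz, hy', hz⟩)
    · exact Or.inl (hJ.tr _ _ _ hxy hyz)
    · refine Or.inr ⟨(hJ.inc _ hxy).trans hyz, ?_, hz⟩
      rcases hy' with rfl | hy'
      · exact Or.inr hxy
      · exact Or.inr (hJ.tr _ _ _ hxy hy')
    · refine Or.inr ⟨hxy.trans (hJ.inc _ hyz), hx, ?_⟩
      rcases hy with rfl | hy
      · exact Or.inr hyz
      · exact Or.inr (hJ.tr _ _ _ hy hyz)
    · exfalso
      have hyj : σ j ≤ y := by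
        rcases hy with rfl | hy
        exacts [le_refl _, le_of_lt (hJ.inc _ hy)]
      have hyi : y ≤ σ i := by
        rcases hy' with rfl | hy'
        exacts [le_refl _, le_of_lt (hJ.inc _ hy')]
      exact absurd (lt_of_lt_of_le hlt (hyj.trans hyi)) (lt_irrefl _)
  obtain ⟨ρ, hρ⟩ := realize (clos (J ∪ invSet n (σ * Equiv.swap i j)))
    (clos_isInvSet _ _ hJ (invSet_isInvSet _))
  have hμ'ρ : invSet n μ' ⊆ invSet n ρ := by
    refine h'.2.2 ρ ?_ ?_
    · rw [hρ]; exact Set.subset_union_right.trans (subset_clos _)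
    · rw [hρ]
      exact Set.Subset.trans (Set.Subset.trans h.2.1 Set.subset_union_left) (subset_clos _)
  have hρK : invSet n ρ ⊆ K := by
    rw [hρ]
    refine clos_subset hKtr ?_
    rintro ⟨p, q⟩ (hp | hp)
    · exact Or.inl hp
    · rw [hσ'] at hp
      rcases hp with hp | hp
      · exact Or.inl (h.1 hp)
      · simp only [Set.mem_singleton_iff, Prod.mk.injEq] at hp
        obtain ⟨rfl, rfl⟩ := hp
        exact Or.inr ⟨hlt, Or.inl rfl, Or.inl rfl⟩
  have key : ∀ x y : Fin n, (x, y) ∈ invSet n μ' → (x, y) ∉ J →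
      x < b ∧ b < y ∧
        (((δ b = Decoration.down ∨ δ b = Decoration.updown) ∧ (b, y) ∈ J) ∨
          ((δ b = Decoration.up ∨ δ b = Decoration.updown) ∧ (x, b) ∈ J)) := by
    intro x y hxy hnot
    rcases hρK (hμ'ρ hxy) with hK' | ⟨hxy', hx, hy⟩
    · exact absurd hK' hnot
    have hxb : x < b := by
      rcases hx with rfl | hx
      exacts [hb1, lt_trans (hJ.inc _ hx) hb1]
    have hby : b < y := by
      rcases hy with rfl | hy
      exacts [hb2, lt_trans hb2 (hJ.inc _ hy)]
    refine ⟨hxb, hby, ?_⟩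
    rcases hcase with ⟨hδ, hpos⟩ | ⟨hδ, hpos⟩
    · left
      refine ⟨hδ, ?_⟩
      have hbc : (b, σ j) ∈ J := h.1 ⟨hb2, by rwa [σ.inv_apply_self]⟩
      rcases hy with rfl | hy
      · exact hbc
      · exact hJ.tr _ _ _ hbc hy
    · right
      refine ⟨hδ, ?_⟩
      have hab : (σ i, b) ∈ J := h.1 ⟨hb1, by rwa [σ.inv_apply_self]⟩
      rcases hx with rfl | hx
      · exact hab
      · exact hJ.tr _ _ _ hx hab
  exact chain δ μ μ' b key _ μ le_rfl Set.Subset.rfl hμμ'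

lemma lub_cong (δ : Fin n → Decoration) {σ σ' : Perm (Fin n)}
    (h : PermutreeCong n δ σ σ') :
    ∀ τ μ μ' : Perm (Fin n), IsWeakLUB n μ σ τ → IsWeakLUB n μ' σ' τ →
      PermutreeCong n δ μ μ' := by
  induction h with
  | rel hm => intro τ μ μ' hμ hμ'; exact lub_move δ hm hμ hμ'
  | refl σ =>
    intro τ μ μ' hμ hμ'
    have heq : invSet n μ = invSet n μ' :=
      Set.Subset.antisymm (hμ.2.2 μ' hμ'.1 hμ'.2.1) (hμ'.2.2 μ hμ.1 hμ.2.1)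
    rw [invSet_inj heq]
    exact PermutreeCong.refl _
  | symm h ih => intro τ μ μ' hμ hμ'; exact PermutreeCong.symm (ih τ μ' μ hμ' hμ)
  | @trans σ₁ σ₂ σ₃ h1 h2 ih1 ih2 =>
    intro τ μ μ' hμ hμ'
    obtain ⟨ν, hν⟩ := exists_lub σ₂ τ
    exact PermutreeCong.trans (ih1 τ μ ν hμ hν) (ih2 τ ν μ' hν hμ')

lemma lub_main (δ : Fin n → Decoration) {σ σ' τ τ' : Perm (Fin n)}
    (h1 : PermutreeCong n δ σ σ') (h2 : PermutreeCong n δ τ τ')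
    {μ μ' : Perm (Fin n)} (hμ : IsWeakLUB n μ σ τ) (hμ' : IsWeakLUB n μ' σ' τ') :
    PermutreeCong n δ μ μ' := by
  obtain ⟨ν, hν⟩ := exists_lub σ' τ
  exact PermutreeCong.trans (lub_cong δ h1 τ μ ν hμ hν)
    (lub_cong δ h2 σ' ν μ' (lub_comm hν) (lub_comm hμ'))

def flipDec : Decoration → Decoration
  | Decoration.down => Decoration.up
  | Decoration.up => Decoration.down
  | d => d

lemma flipDec_flipDec : ∀ d, flipDec (flipDec d) = d := by
  intro d; cases d <;> rfl

lemma rev_mul_rev : (Fin.revPerm : Perm (Fin n)) * Fin.revPerm = 1 := by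
  ext p; simp [Fin.rev_rev]

lemma mem_inv_rev (σ : Perm (Fin n)) (p q : Fin n) :
    (p, q) ∈ invSet n (σ * Fin.revPerm) ↔ p < q ∧ σ⁻¹ p < σ⁻¹ q := by
  have hinv : (σ * Fin.revPerm)⁻¹ = Fin.revPerm * σ⁻¹ := by
    rw [mul_inv_rev]; rfl
  simp only [invSet, Set.mem_setOf_eq, hinv, Equiv.Perm.mul_apply, Fin.revPerm_apply]
  exact and_congr_right fun _ => Fin.rev_lt_rev

lemma inv_rev_subset {σ τ : Perm (Fin n)} (h : invSet n σ ⊆ invSet n τ) :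
    invSet n (τ * Fin.revPerm) ⊆ invSet n (σ * Fin.revPerm) := by
  rintro ⟨p, q⟩ hp
  rw [mem_inv_rev] at hp
  rw [mem_inv_rev]
  refine ⟨hp.1, ?_⟩
  rcases lt_trichotomy (σ⁻¹ p) (σ⁻¹ q) with hh | hh | hh
  · exact hh
  · exact absurd (σ⁻¹.injective hh) (ne_of_lt hp.1)
  · have hmem : (p, q) ∈ invSet n σ := ⟨hp.1, hh⟩
    exact absurd (h hmem).2 (not_lt_of_gt hp.2)

lemma mul_rev_rev (σ : Perm (Fin n)) : σ * Fin.revPerm * Fin.revPerm = σ := by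
  rw [mul_assoc, rev_mul_rev, mul_one]

lemma glb_to_lub {μ σ τ : Perm (Fin n)} (h : IsWeakGLB n μ σ τ) :
    IsWeakLUB n (μ * Fin.revPerm) (σ * Fin.revPerm) (τ * Fin.revPerm) := by
  refine ⟨inv_rev_subset h.1, inv_rev_subset h.2.1, ?_⟩
  intro ρ hσ hτ
  have hρ : ρ = (ρ * Fin.revPerm) * Fin.revPerm := (mul_rev_rev ρ).symm
  rw [hρ] at hσ hτ ⊢
  have hσ' : invSet n (ρ * Fin.revPerm) ⊆ invSet n σ := by
    have := inv_rev_subset hσ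
    rwa [mul_rev_rev, mul_rev_rev] at this
  have hτ' : invSet n (ρ * Fin.revPerm) ⊆ invSet n τ := by
    have := inv_rev_subset hτ
    rwa [mul_rev_rev, mul_rev_rev] at this
  exact inv_rev_subset (h.2.2 _ hσ' hτ')

lemma move_rev (δ : Fin n → Decoration) {σ τ : Perm (Fin n)}
    (hm : PermutreeMove n δ σ τ) :
    PermutreeMove n (fun v => flipDec (δ v)) (τ * Fin.revPerm) (σ * Fin.revPerm) := by
  obtain ⟨i, j, hij, hlt, rfl, b, hb1, hb2, hcase⟩ := hm
  have hja : (j : ℕ) < n := j.isLt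
  refine ⟨j.rev, i.rev, ?_, ?_, ?_, b, ?_, ?_, ?_⟩
  · rw [Fin.val_rev, Fin.val_rev]
    omega
  · have e1 : ((σ * Equiv.swap i j) * (Fin.revPerm : Perm (Fin n))) j.rev = σ i := by
      simp [Equiv.Perm.mul_apply, Fin.rev_rev, Equiv.swap_apply_right]
    have e2 : ((σ * Equiv.swap i j) * (Fin.revPerm : Perm (Fin n))) i.rev = σ j := by
      simp [Equiv.Perm.mul_apply, Fin.rev_rev, Equiv.swap_apply_left]
    rw [e1, e2]; exact hlt
  · have hsw : (Fin.revPerm : Perm (Fin n)) * Equiv.swap j.rev i.rev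
        = Equiv.swap j i * Fin.revPerm := by
      have := Equiv.mul_swap_eq_swap_mul (Fin.revPerm : Perm (Fin n)) j.rev i.rev
      simpa [Fin.rev_rev] using this
    have : (σ * Equiv.swap i j * Fin.revPerm) * Equiv.swap j.rev i.rev
        = σ * Fin.revPerm := by
      rw [mul_assoc (σ * Equiv.swap i j), hsw, ← mul_assoc, mul_assoc σ,
        Equiv.swap_comm j i, Equiv.swap_mul_self, mul_one]
    rw [this]
  · have e1 : ((σ * Equiv.swap i j) * (Fin.revPerm : Perm (Fin n))) j.rev = σ i := by
      simp [Equiv.Perm.mul_apply, Fin.rev_rev, Equiv.swap_apply_right]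
    rw [e1]; exact hb1
  · have e2 : ((σ * Equiv.swap i j) * (Fin.revPerm : Perm (Fin n))) i.rev = σ j := by
      simp [Equiv.Perm.mul_apply, Fin.rev_rev, Equiv.swap_apply_left]
    rw [e2]; exact hb2
  · have hbi : σ⁻¹ b ≠ i := fun hh => absurd (hh ▸ σ.apply_inv_self b) (by
      intro hc; rw [hc] at hb1; exact lt_irrefl _ hb1)
    have hbj : σ⁻¹ b ≠ j := fun hh => absurd (hh ▸ σ.apply_inv_self b) (by
      intro hc; rw [hc] at hb2; exact lt_irrefl _ hb2)
    have hbinv : ((σ * Equiv.swap i j * (Fin.revPerm : Perm (Fin n))))⁻¹ b = (σ⁻¹ b).rev := by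
      rw [mul_inv_rev, mul_inv_rev, Equiv.swap_inv]
      have : (Fin.revPerm : Perm (Fin n))⁻¹ = Fin.revPerm := rfl
      rw [this]
      simp only [Equiv.Perm.mul_apply, Fin.revPerm_apply]
      rw [Equiv.swap_apply_of_ne_of_ne hbi hbj]
    rcases hcase with ⟨hδ, hpos⟩ | ⟨hδ, hpos⟩
    · right
      constructor
      · show flipDec (δ b) = _ ∨ flipDec (δ b) = _
        rcases hδ with hδ | hδ <;> rw [hδ] <;> simp [flipDec]
      · rw [hbinv]
        exact Fin.rev_lt_rev.2 hpos
    · left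
      constructor
      · show flipDec (δ b) = _ ∨ flipDec (δ b) = _
        rcases hδ with hδ | hδ <;> rw [hδ] <;> simp [flipDec]
      · rw [hbinv]
        exact Fin.rev_lt_rev.2 hpos

lemma cong_rev (δ : Fin n → Decoration) {σ τ : Perm (Fin n)}
    (h : PermutreeCong n δ σ τ) :
    PermutreeCong n (fun v => flipDec (δ v)) (σ * Fin.revPerm) (τ * Fin.revPerm) := by
  induction h with
  | rel hm => exact PermutreeCong.symm (PermutreeCong.rel (move_rev δ hm))
  | refl σ => exact PermutreeCong.refl _
  | symm h ih => exact PermutreeCong.symm ih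
  | trans h1 h2 ih1 ih2 => exact PermutreeCong.trans ih1 ih2

end PTAux

/-- The `δ`-permutree congruence is a lattice congruence of the right weak
order: least upper bounds (resp. greatest lower bounds) of congruent pairs
are congruent. -/
theorem permutree_congruence_is_lattice_congruence (n : ℕ)
    (δ : Fin n → Decoration) (σ σ' τ τ' : Equiv.Perm (Fin n))
    (h1 : PermutreeCong n δ σ σ') (h2 : PermutreeCong n δ τ τ') :
    (∀ μ μ' : Equiv.Perm (Fin n),
      IsWeakLUB n μ σ τ → IsWeakLUB n μ' σ' τ' → PermutreeCong n δ μ μ') ∧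
    (∀ μ μ' : Equiv.Perm (Fin n),
      IsWeakGLB n μ σ τ → IsWeakGLB n μ' σ' τ' → PermutreeCong n δ μ μ') := by
  constructor
  · intro μ μ' hμ hμ'
    exact PTAux.lub_main δ h1 h2 hμ hμ'
  · intro μ μ' hμ hμ'
    have hc := PTAux.lub_main (fun v => PTAux.flipDec (δ v))
      (PTAux.cong_rev δ h1) (PTAux.cong_rev δ h2)
      (PTAux.glb_to_lub hμ) (PTAux.glb_to_lub hμ')
    have hc2 := PTAux.cong_rev (fun v => PTAux.flipDec (δ v)) hc
    have hδ : (fun v => PTAux.flipDec (PTAux.flipDec (δ v))) = δ :=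
      funext fun v => PTAux.flipDec_flipDec (δ v)
    rw [PTAux.mul_rev_rev, PTAux.mul_rev_rev, hδ] at hc2
    exact hc2
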